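/- Assume c0 ≥ 1 and d_max ≥ 1. Then for every μ ≥ 0, d_max − F(μ) ≥ (d_max·c0·e^{−λ} / (2n)) · e^{−λ·d_max·μ}. -/

import Mathlib

open Finset Filter Matrix

variable {V : Type*}

/-- `ball E r j` : set of vertices reachable from `r` within `j` steps along edges in `E`. -/
def ball [Fintype V] [DecidableEq V] (E : Finset (V × V)) (r : V) : ℕ → Finset V
  | 0 => {r}
  | j + 1 => Finset.univ.filter fun v => v ∈ ball E r j ∨ ∃ u ∈ ball E r j, (u, v) ∈ E

/-- in-degree of `v` restricted to sources in `N_c`. -/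
def degc [Fintype V] [DecidableEq V] (E : Finset (V × V)) (r : V) (c : ℕ) (v : V) : ℕ :=
  ((ball E r c).filter fun u => (u, v) ∈ E).card

/-- λ = 1/√K with K = |N_c|. -/
noncomputable def lamc [Fintype V] [DecidableEq V] (E : Finset (V × V)) (r : V) (c : ℕ) : ℝ :=
  1 / Real.sqrt ((ball E r c).card : ℝ)

/-- the logit ξ_v(μ). -/
noncomputable def xi [Fintype V] [DecidableEq V] (E : Finset (V × V)) (r : V) (c : ℕ)
    (μ : V → ℝ) (v : V) : ℝ :=
  lamc E r c * (if v ∈ ball E r c then 1 else 0)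
    + lamc E r c * ∑ u ∈ (ball E r c).filter (fun u => (u, v) ∈ E), μ u

/-- BFS loss. -/
noncomputable def bfsLoss [Fintype V] [DecidableEq V] (E : Finset (V × V)) (r : V) (c : ℕ)
    (μ : V → ℝ) : ℝ :=
  - Real.log ((∑ v ∈ ball E r (c + 1), Real.exp (xi E r c μ v)) /
      ∑ v : V, Real.exp (xi E r c μ v))

/-- edge set of the permuted instance. -/
def permE [Fintype V] [DecidableEq V] (π : Equiv.Perm V) (E : Finset (V × V)) :
    Finset (V × V) :=
  E.image fun e => (π e.1, π e.2)

/-- permutation-averaged BFS loss. -/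
noncomputable def avgBfsLoss [Fintype V] [DecidableEq V] (E : Finset (V × V)) (r : V) (c : ℕ)
    (μ : V → ℝ) : ℝ :=
  ((Nat.factorial (Fintype.card V) : ℝ))⁻¹ *
    ∑ π : Equiv.Perm V, bfsLoss (permE π E) (π r) c μ

/-- coconut loss with target `p`. -/
noncomputable def cocoLoss [Fintype V] [DecidableEq V] (E : Finset (V × V)) (r : V) (c : ℕ)
    (p : V) (μ : V → ℝ) : ℝ :=
  - Real.log (Real.exp (xi E r c μ p) / ∑ v : V, Real.exp (xi E r c μ v))

/-- permutation-averaged coconut loss. -/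
noncomputable def avgCocoLoss [Fintype V] [DecidableEq V] (E : Finset (V × V)) (r : V) (c : ℕ)
    (p : V) (μ : V → ℝ) : ℝ :=
  ((Nat.factorial (Fintype.card V) : ℝ))⁻¹ *
    ∑ π : Equiv.Perm V, cocoLoss (permE π E) (π r) c (π p) μ

/-- the scalar function F. -/
noncomputable def Fc [Fintype V] [DecidableEq V] (E : Finset (V × V)) (r : V) (c : ℕ)
    (x : ℝ) : ℝ :=
  (∑ u ∈ ball E r (c + 1), (degc E r c u : ℝ) *
      Real.exp (lamc E r c * ((if u ∈ ball E r c then 1 else 0) + x * (degc E r c u : ℝ))))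
    / ((∑ u ∈ ball E r (c + 1),
        Real.exp (lamc E r c * ((if u ∈ ball E r c then 1 else 0) + x * (degc E r c u : ℝ))))
      + ((Fintype.card V : ℝ) - ((ball E r (c + 1)).card : ℝ)))

/-- lower bound on the gap d_max − F(μ) for μ ≥ 0:
d_max − F(μ) ≥ (d_max·c0·e^{−λ}/(2n))·e^{−λ·d_max·μ}. -/
theorem stmt11 {V : Type*} [Fintype V] [DecidableEq V]
    (E : Finset (V × V)) (r : V) (c : ℕ)
    (hc0 : (ball E r (c + 1)).card + 1 ≤ Fintype.card V)
    (hdmax : 1 ≤ Finset.univ.sup (degc E r c)) :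
    ∀ x : ℝ, 0 ≤ x →
      ((Finset.univ.sup (degc E r c) : ℕ) : ℝ)
            * ((Fintype.card V : ℝ) - ((ball E r (c + 1)).card : ℝ))
            * Real.exp (-(lamc E r c)) / (2 * (Fintype.card V : ℝ))
          * Real.exp (-(lamc E r c * ((Finset.univ.sup (degc E r c) : ℕ) : ℝ) * x))
        ≤ ((Finset.univ.sup (degc E r c) : ℕ) : ℝ) - Fc E r c x := by
  intro x hx
  have hlam : 0 ≤ lamc E r c := by
    unfold lamc; positivity
  set lam := lamc E r c with hlamdef
  set D : ℝ := ((Finset.univ.sup (degc E r c) : ℕ) : ℝ) with hDdef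
  have hD1 : (1:ℝ) ≤ D := by rw [hDdef]; exact_mod_cast hdmax
  have hD0 : (0:ℝ) ≤ D := le_trans zero_le_one hD1
  set n : ℝ := (Fintype.card V : ℝ) with hndef
  set c0 : ℝ := n - ((ball E r (c + 1)).card : ℝ) with hc0def
  have hcard : ((ball E r (c + 1)).card : ℝ) + 1 ≤ n := by
    rw [hndef]; exact_mod_cast hc0
  have hc0' : (1:ℝ) ≤ c0 := by rw [hc0def]; linarith
  have hn1 : (1:ℝ) ≤ n := by
    have : (0:ℝ) ≤ ((ball E r (c + 1)).card : ℝ) := Nat.cast_nonneg _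
    linarith
  set f : V → ℝ := fun u => Real.exp (lam * ((if u ∈ ball E r c then 1 else 0)
      + x * (degc E r c u : ℝ))) with hfdef
  set Es : ℝ := ∑ u ∈ ball E r (c + 1), f u with hEsdef
  set Ss : ℝ := ∑ u ∈ ball E r (c + 1), (degc E r c u : ℝ) * f u with hSsdef
  have hFc : Fc E r c x = Ss / (Es + c0) := rfl
  have hd : ∀ u : V, ((degc E r c u : ℕ) : ℝ) ≤ D := fun u => by
    rw [hDdef]; exact_mod_cast Finset.le_sup (Finset.mem_univ u)
  set M : ℝ := Real.exp (lam * (1 + D * x)) with hMdef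
  have hM1 : (1:ℝ) ≤ M := Real.one_le_exp (by positivity)
  have hfM : ∀ u : V, f u ≤ M := by
    intro u
    rw [hfdef, hMdef]
    apply Real.exp_le_exp.mpr
    apply mul_le_mul_of_nonneg_left _ hlam
    have h1 : (if u ∈ ball E r c then (1:ℝ) else 0) ≤ 1 := by split <;> norm_num
    have h2 : x * (degc E r c u : ℝ) ≤ D * x := by
      have := mul_le_mul_of_nonneg_left (hd u) hx
      linarith [this]
    linarith
  have hEs0 : 0 ≤ Es := Finset.sum_nonneg fun u _ => (Real.exp_pos _).le
  have hT : 0 < Es + c0 := by linarith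
  have hS : Ss ≤ D * Es := by
    rw [hSsdef, hEsdef, Finset.mul_sum]
    apply Finset.sum_le_sum
    intro u _
    exact mul_le_mul_of_nonneg_right (hd u) (Real.exp_pos _).le
  have hEM : Es ≤ n * M := by
    calc Es ≤ ∑ _u ∈ ball E r (c + 1), M := Finset.sum_le_sum fun u _ => hfM u
      _ = ((ball E r (c + 1)).card : ℝ) * M := by
          rw [Finset.sum_const, nsmul_eq_mul]
      _ ≤ n * M := by
          apply mul_le_mul_of_nonneg_right _ (by linarith)
          linarith
  have hc0M : c0 ≤ n * M := by
    have : c0 ≤ n := by rw [hc0def]; have h : (0:ℝ) ≤ ((ball E r (c + 1)).card : ℝ) := Nat.cast_nonneg _; linarith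
    calc c0 ≤ n := this
      _ ≤ n * M := le_mul_of_one_le_right (by linarith) hM1
  have hT2 : Es + c0 ≤ 2 * n * M := by linarith
  have hMpos : 0 < M := Real.exp_pos _
  rw [hFc]
  have key : D * c0 * Real.exp (-lam) / (2 * n) * Real.exp (-(lam * D * x))
      = D * c0 / (2 * n * M) := by
    rw [hMdef]
    rw [show lam * (1 + D * x) = lam + lam * D * x by ring, Real.exp_add,
      Real.exp_neg, Real.exp_neg]
    have e1 := Real.exp_pos lam
    have e2 := Real.exp_pos (lam * D * x)
    field_simp
  rw [key]
  have step1 : D * c0 / (2 * n * M) ≤ D * c0 / (Es + c0) := by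
    apply div_le_div_of_nonneg_left (by positivity) hT hT2
  have step2 : Ss / (Es + c0) + D * c0 / (Es + c0) ≤ D := by
    rw [← add_div, div_le_iff₀ hT]
    nlinarith [hS]
  linarith
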